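/- Let N ≥ 2 be an integer and suppose d : ℕ → ℝ satisfies, for all n ≥ 0, the tropical multilinear equation d_{n+N+3} + 2·d_{n+N} + ∑_{j=1}^{N−1} d_{n+j} = max M_n, where M_n consists of the N+2 numbers: (i) d_{n+3} + d_{n+N} + ∑_{j=2}^{N+1} d_{n+j}; (ii) ∑_{j=1}^{N+2} d_{n+j}; (iii) d_n + d_{n+3} + ∑_{j=3}^{N+2} d_{n+j}; (iv) for each k = 1, …, N−1, d_{n+k} + d_{n+k+3} + ∑_{j=1, j≠k+1, j≠k+2}^{N+2} d_{n+j}. Then there exist real parameters A, Ā, B, C with C ≥ 0 and an integer m ≥ 0 such that d_n = (1/4)·C·n² + B·n + A + Ā·(−1)ⁿ for all n ≥ m. -/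

import Mathlib

section Aux

variable (d : ℕ → ℝ) (M n : ℕ)

private lemma trop_idA2 :
    ∑ j ∈ Finset.range (M+4), d (n+j+1) =
    ∑ j ∈ Finset.range (M+1), d (n+j+1) + d (n+M+2) + d (n+M+3) + d (n+M+4) := by
  rw [show M+4 = (M+1)+1+1+1 by omega, Finset.sum_range_succ, Finset.sum_range_succ,
    Finset.sum_range_succ]
  have e1 : n+(M+1)+1 = n+M+2 := by omega
  have e2 : n+(M+1+1)+1 = n+M+3 := by omega
  have e3 : n+(M+1+1+1)+1 = n+M+4 := by omega
  rw [e1, e2, e3]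

private lemma trop_idA1 :
    ∑ j ∈ Finset.range (M+4), d (n+j+1) =
    ∑ j ∈ Finset.range (M+2), d (n+j+2) + d (n+1) + d (n+M+4) := by
  rw [show M+4 = M+3+1 from rfl, Finset.sum_range_succ,
    show M+3 = M+2+1 from rfl, Finset.sum_range_succ']
  have e1 : n+(M+2+1)+1 = n+M+4 := by omega
  have e2 : ∀ j, n+(j+1)+1 = n+j+2 := fun j => by omega
  have e3 : n+0+1 = n+1 := by omega
  simp only [e1, e2, e3]

private lemma trop_idA3 :
    ∑ j ∈ Finset.range (M+4), d (n+j+1) =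
    ∑ j ∈ Finset.range (M+2), d (n+j+3) + d (n+1) + d (n+2) := by
  rw [show M+4 = M+3+1 from rfl, Finset.sum_range_succ',
    show M+3 = M+2+1 from rfl]
  rw [Finset.sum_range_succ' (fun j => d (n+(j+1)+1)) (M+2)]
  have e2 : ∀ j, n+(j+1+1)+1 = n+j+3 := fun j => by omega
  have e3 : n+(0+1)+1 = n+2 := by omega
  have e4 : n+0+1 = n+1 := by omega
  simp only [e2, e3, e4]
  ring

private lemma trop_idIcc :
    ∑ j ∈ Finset.Icc 1 (M+4), d (n+j) = ∑ j ∈ Finset.range (M+4), d (n+j+1) := by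
  rw [show Finset.Icc 1 (M+4) = Finset.Ico 1 (M+5) by exact (Finset.Ico_add_one_right_eq_Icc (a := 1) (b := M+4)).symm,
    Finset.sum_Ico_eq_sum_range]
  refine Finset.sum_congr (by norm_num) fun j _ => ?_
  congr 1
  omega

private lemma trop_idErase {k : ℕ} (hk : k ≤ M) :
    ∑ j ∈ ((Finset.Icc 1 (M+4)).erase (k+2)).erase (k+3), d (n+j) =
    ∑ j ∈ Finset.range (M+4), d (n+j+1) - d (n+k+2) - d (n+k+3) := by
  have h3 : (k+3) ∈ (Finset.Icc 1 (M+4)).erase (k+2) := by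
    simp only [Finset.mem_erase, Finset.mem_Icc]
    omega
  have h2 : (k+2) ∈ Finset.Icc 1 (M+4) := by
    simp only [Finset.mem_Icc]; omega
  rw [Finset.sum_erase_eq_sub h3, Finset.sum_erase_eq_sub h2, trop_idIcc]
  have e1 : n+(k+2) = n+k+2 := by omega
  have e2 : n+(k+3) = n+k+3 := by omega
  rw [e1, e2]

private lemma trop_idTel :
    ∑ j ∈ Finset.range (M+1), (d (n+j+4) - d (n+j+3) - d (n+j+2) + d (n+j+1)) =
    d (n+M+4) - d (n+M+2) - d (n+3) + d (n+1) := by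
  have h : ∑ j ∈ Finset.range (M+1), (d (n+j+4) - d (n+j+3) - d (n+j+2) + d (n+j+1))
      = ∑ j ∈ Finset.range (M+1),
        ((fun i => d (n+i+3) - d (n+i+1)) (j+1) - (fun i => d (n+i+3) - d (n+i+1)) j) := by
    refine Finset.sum_congr rfl fun j _ => ?_
    have e1 : n+(j+1)+3 = n+j+4 := by omega
    have e2 : n+(j+1)+1 = n+j+2 := by omega
    simp only [e1, e2]
    ring
  rw [h, Finset.sum_range_sub (fun i => d (n+i+3) - d (n+i+1)) (M+1)]
  have e1 : n+(M+1)+3 = n+M+4 := by omega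
  have e2 : n+(M+1)+1 = n+M+2 := by omega
  simp only [e1, e2]
  ring

end Aux

/-- the solutions of the tropical multilinear equation eventually grow
quadratically: `d_n = (1/4)Cn² + Bn + A + Ā(-1)ⁿ` for all sufficiently large `n`,
with `C ≥ 0`. -/
theorem tropical_multilinear_quadratic_growth (N : ℕ) (hN : 2 ≤ N) (d : ℕ → ℝ)
    (hd : ∀ n : ℕ,
      d (n + N + 3) + 2 * d (n + N) + ∑ j ∈ Finset.range (N - 1), d (n + j + 1) =
        max (d (n + 3) + d (n + N) + ∑ j ∈ Finset.range N, d (n + j + 2))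
          (max (∑ j ∈ Finset.range (N + 2), d (n + j + 1))
            (max (d n + d (n + 3) + ∑ j ∈ Finset.range N, d (n + j + 3))
              ((Finset.range (N - 1)).sup'
                (Finset.nonempty_range_iff.mpr (by omega))
                (fun k => d (n + k + 1) + d (n + k + 4) +
                  ∑ j ∈ ((Finset.Icc 1 (N + 2)).erase (k + 2)).erase (k + 3), d (n + j)))))) :
    ∃ A Abar B C : ℝ, 0 ≤ C ∧ ∃ m : ℕ, ∀ n : ℕ, m ≤ n →
      d n = (1 / 4) * C * (n : ℝ) ^ 2 + B * (n : ℝ) + A + Abar * (-1 : ℝ) ^ n := by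
  obtain ⟨M, rfl⟩ : ∃ M, N = M + 2 := ⟨N - 2, by omega⟩
  -- normalize the indices in hd
  have enN : ∀ n : ℕ, n + (M+2) = n + M + 2 := fun n => by omega
  have enN3 : ∀ n : ℕ, n + (M+2) + 3 = n + M + 5 := fun n => by omega
  simp only [show M+2-1 = M+1 from rfl, show M+2+2 = M+4 from rfl, enN3, enN] at hd
  set q : ℕ → ℝ := fun m => d (m+3) - d (m+2) - d (m+1) + d m with hq
  -- the key inequalities extracted from the equation
  have h0 : ∀ n : ℕ, 0 ≤ q (n + M + 2) := by
    intro n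
    have h := hd n
    have hle : ∑ j ∈ Finset.range (M+4), d (n+j+1) ≤
        d (n + M + 5) + 2 * d (n + M + 2) + ∑ j ∈ Finset.range (M+1), d (n + j + 1) := by
      rw [h]; exact le_max_of_le_right (le_max_left _ _)
    have hA2 := trop_idA2 d M n
    simp only [hq]
    have e1 : n+M+2+3 = n+M+5 := by omega
    have e2 : n+M+2+2 = n+M+4 := by omega
    have e3 : n+M+2+1 = n+M+3 := by omega
    rw [e1, e2, e3]
    linarith
  have h1 : ∀ n k : ℕ, k ≤ M + 1 → q (n + k) ≤ q (n + M + 2) := by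
    intro n k hk
    have h := hd n
    have hA2 := trop_idA2 d M n
    rcases Nat.eq_zero_or_pos k with rfl | hkpos
    · -- use the A3 branch
      have hle : d n + d (n + 3) + ∑ j ∈ Finset.range (M+2), d (n + j + 3) ≤
          d (n + M + 5) + 2 * d (n + M + 2) + ∑ j ∈ Finset.range (M+1), d (n + j + 1) := by
        rw [h]; exact le_max_of_le_right (le_max_of_le_right (le_max_left _ _))
      have hA3 := trop_idA3 d M n
      simp only [hq]
      have e1 : n+M+2+3 = n+M+5 := by omega
      have e2 : n+M+2+2 = n+M+4 := by omega
      have e3 : n+M+2+1 = n+M+3 := by omega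
      simp only [e1, e2, e3, Nat.add_zero]
      linarith
    · -- use the sup' branch at k-1
      obtain ⟨k', rfl⟩ : ∃ k', k = k' + 1 := ⟨k - 1, by omega⟩
      have hk' : k' ∈ Finset.range (M+1) := Finset.mem_range.mpr (by omega)
      have hle : d (n + k' + 1) + d (n + k' + 4) +
          ∑ j ∈ ((Finset.Icc 1 (M+4)).erase (k'+2)).erase (k'+3), d (n+j) ≤
          d (n + M + 5) + 2 * d (n + M + 2) + ∑ j ∈ Finset.range (M+1), d (n + j + 1) := by
        rw [h]
        exact le_max_of_le_right (le_max_of_le_right (le_max_of_le_right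
          (Finset.le_sup' (fun k => d (n + k + 1) + d (n + k + 4) +
            ∑ j ∈ ((Finset.Icc 1 (M+4)).erase (k+2)).erase (k+3), d (n+j)) hk')))
      have hE := trop_idErase d M n (show k' ≤ M by omega)
      simp only [hq]
      have e1 : n+(k'+1)+3 = n+k'+4 := by omega
      have e2 : n+(k'+1)+2 = n+k'+3 := by omega
      have e3 : n+(k'+1)+1 = n+k'+2 := by omega
      have e4 : n+(k'+1) = n+k'+1 := by omega
      have f1 : n+M+2+3 = n+M+5 := by omega
      have f2 : n+M+2+2 = n+M+4 := by omega
      have f3 : n+M+2+1 = n+M+3 := by omega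
      rw [e1, e2, e3, e4, f1, f2, f3]
      linarith
  -- q is nondecreasing from index M+1 on
  have step : ∀ m : ℕ, M + 1 ≤ m → q m ≤ q (m + 1) := by
    intro m hm
    obtain ⟨n, rfl⟩ : ∃ n, m = n + M + 1 := ⟨m - (M+1), by omega⟩
    have := h1 n (M+1) le_rfl
    have e1 : n + (M+1) = n + M + 1 := by omega
    rw [e1] at this
    have e2 : n + M + 1 + 1 = n + M + 2 := by omega
    rw [e2]
    exact this
  have mono : ∀ a b : ℕ, M + 1 ≤ a → a ≤ b → q a ≤ q b := by
    intro a b ha hab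
    induction b, hab using Nat.le_induction with
    | base => exact le_rfl
    | succ b hab ih => exact le_trans ih (step b (le_trans ha hab))
  have nonneg : ∀ m : ℕ, M + 2 ≤ m → 0 ≤ q m := by
    intro m hm
    obtain ⟨n, rfl⟩ : ∃ n, m = n + M + 2 := ⟨m - (M+2), by omega⟩
    exact h0 n
  -- the reverse inequality, valid for n ≥ M+1
  have h2 : ∀ n : ℕ, M + 1 ≤ n → q (n + M + 2) ≤ q (n + M + 1) := by
    intro n hn
    have h := hd n
    have hA2 := trop_idA2 d M n
    set S : ℝ := ∑ j ∈ Finset.range (M+4), d (n+j+1) with hS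
    have hqnn : 0 ≤ q (n + M + 1) := nonneg _ (by omega)
    have hqv1 : q (n+M+1) = d (n+M+4) - d (n+M+3) - d (n+M+2) + d (n+M+1) := by
      simp only [hq]
    have hqv2 : q (n+M+2) = d (n+M+5) - d (n+M+4) - d (n+M+3) + d (n+M+2) := by
      simp only [hq]
    -- bound each branch by S + q (n + M + 1)
    have hb1 : d (n + 3) + d (n + M + 2) + ∑ j ∈ Finset.range (M+2), d (n + j + 2) ≤
        S + q (n + M + 1) := by
      have hA1 := trop_idA1 d M n
      have hT := trop_idTel d M n
      have hTnn : (0:ℝ) ≤ ∑ j ∈ Finset.range (M+1),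
          (d (n+j+4) - d (n+j+3) - d (n+j+2) + d (n+j+1)) := by
        refine Finset.sum_nonneg fun j hj => ?_
        have := nonneg (n + j + 1) (by omega)
        simp only [hq] at this
        have e1 : n+j+1+3 = n+j+4 := by omega
        have e2 : n+j+1+2 = n+j+3 := by omega
        have e3 : n+j+1+1 = n+j+2 := by omega
        rw [e1, e2, e3] at this
        linarith
      linarith
    have hb2 : S ≤ S + q (n + M + 1) := by linarith
    have hb3 : d n + d (n + 3) + ∑ j ∈ Finset.range (M+2), d (n + j + 3) ≤
        S + q (n + M + 1) := by
      have hA3 := trop_idA3 d M n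
      have hmono : q n ≤ q (n + M + 1) := mono n (n + M + 1) hn (by omega)
      have hqvn : q n = d (n+3) - d (n+2) - d (n+1) + d n := by simp only [hq]
      linarith
    have hb4 : (Finset.range (M+1)).sup'
        (Finset.nonempty_range_iff.mpr (by omega))
        (fun k => d (n + k + 1) + d (n + k + 4) +
          ∑ j ∈ ((Finset.Icc 1 (M+4)).erase (k+2)).erase (k+3), d (n+j)) ≤
        S + q (n + M + 1) := by
      refine Finset.sup'_le _ _ fun k hk => ?_
      have hkM : k ≤ M := by simpa using Nat.lt_succ_iff.mp (Finset.mem_range.mp hk)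
      have hE := trop_idErase d M n hkM
      have hmono : q (n + k + 1) ≤ q (n + M + 1) :=
        mono (n + k + 1) (n + M + 1) (by omega) (by omega)
      have hqvk : q (n+k+1) = d (n+k+4) - d (n+k+3) - d (n+k+2) + d (n+k+1) := by
        simp only [hq]
      linarith
    have hub : d (n + M + 5) + 2 * d (n + M + 2) + ∑ j ∈ Finset.range (M+1), d (n + j + 1) ≤
        S + q (n + M + 1) := by
      rw [h]
      exact max_le hb1 (max_le hb2 (max_le hb3 hb4))
    linarith
  -- q is eventually constant
  set c : ℝ := q (2*M+3) with hc
  have hc0 : 0 ≤ c := nonneg _ (by omega)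
  have hconst : ∀ m : ℕ, 2*M+3 ≤ m → q m = c := by
    intro m hm
    induction m, hm using Nat.le_induction with
    | base => rfl
    | succ m hm ih =>
      refine le_antisymm ?_ (ih ▸ mono m (m+1) (by omega) (by omega))
      obtain ⟨n, rfl⟩ : ∃ n, m = n + M + 1 := ⟨m - (M+1), by omega⟩
      have := h2 n (by omega)
      rw [ih] at this
      have e : n + M + 1 + 1 = n + M + 2 := by omega
      rw [e]
      exact this
  -- P m = d (m+2) - d m is eventually arithmetic
  set P : ℕ → ℝ := fun m => d (m+2) - d m with hPdef
  set b : ℝ := P (2*M+3) - c * (2*M+3) with hb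
  have hP : ∀ m : ℕ, 2*M+3 ≤ m → P m = c * m + b := by
    intro m hm
    induction m, hm using Nat.le_induction with
    | base => rw [hb]; push_cast; ring
    | succ m hm ih =>
      have hqm := hconst m hm
      simp only [hq] at hqm
      simp only [hPdef]
      simp only [hPdef] at ih
      rw [show m+1+2 = m+3 by omega]
      push_cast
      linarith [ih, hqm]
  -- assemble the quadratic formula
  set B : ℝ := (b - c) / 2 with hB
  set e : ℕ → ℝ := fun m => d m - ((1/4) * c * (m:ℝ)^2 + B * m) with he
  have hstep2 : ∀ m : ℕ, 2*M+3 ≤ m → e (m+2) = e m := by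
    intro m hm
    have := hP m hm
    simp only [hPdef] at this
    simp only [he, hB]
    push_cast
    linear_combination this
  have hpar : ∀ j : ℕ, e (2*M+3 + 2*j) = e (2*M+3) ∧ e (2*M+4 + 2*j) = e (2*M+4) := by
    intro j
    induction j with
    | zero => simp
    | succ j ih =>
      constructor
      · have e1 : 2*M+3+2*(j+1) = (2*M+3+2*j) + 2 := by omega
        rw [e1, hstep2 _ (by omega)]
        exact ih.1
      · have e1 : 2*M+4+2*(j+1) = (2*M+4+2*j) + 2 := by omega
        rw [e1, hstep2 _ (by omega)]
        exact ih.2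
  set v1 : ℝ := e (2*M+3) with hv1
  set v0 : ℝ := e (2*M+4) with hv0
  refine ⟨(v0+v1)/2, (v0-v1)/2, B, c, hc0, 2*M+3, fun n hn => ?_⟩
  have hen : e n = (v0+v1)/2 + (v0-v1)/2 * (-1:ℝ)^n := by
    rcases Nat.even_or_odd (n - (2*M+3)) with ⟨j, hj⟩ | ⟨j, hj⟩
    · -- n = 2M+3 + 2j, odd
      have hn' : n = 2*M+3 + 2*j := by omega
      have hodd : Odd n := ⟨M+j+1, by omega⟩
      rw [hodd.neg_one_pow, hn', (hpar j).1]
      ring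
    · -- n = 2M+4 + 2j, even
      have hn' : n = 2*M+4 + 2*j := by omega
      have heven : Even n := ⟨M+j+2, by omega⟩
      rw [heven.neg_one_pow, hn', (hpar j).2]
      ring
  simp only [he] at hen
  linarith [hen]
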